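/- Let θ_i, θ̂ ∈ [0, π/2), φ̂ ∈ ℝ and w > 0. Define the 2×2 real matrix A := T_{θ̂}^{-1} · R_{φ̂}ᵀ · ((1/w²)·T_{θ_i}²) · R_{φ̂} · T_{θ̂}^{-1}. Then: (i) A is symmetric and positive definite with det A = cos²θ_i/(w⁴·cos²θ̂); and (ii) for every orthogonal 2×2 matrix Q and every λ₁, λ₂ > 0 with A = Qᵀ·diag(λ₁, λ₂)·Q, one has for all a ∈ ℝ²: cos θ̂ · √(λ₁λ₂) · exp( −2·(T_{θ̂} R_{−φ̂} a)ᵀ · Qᵀ diag(λ₁, λ₂) Q · (T_{θ̂} R_{−φ̂} a) ) = (cos θ_i/w²) · exp( −(2/w²)·aᵀ T_{θ_i}² a ). That is, a general astigmatic Gaussian beam with incidence angles (θ̂, φ̂), waist radii chosen so that 1/w(d, ŵ_{0,i})² = λ_i, and footprint rotation given by the eigenvectors of A produces across the surface exactly the same power density as the original Gaussian beam with incidence elevation angle θ_i. -/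

import Mathlib

open Real Matrix

/-- Counter-clockwise rotation matrix `R_τ`. -/
noncomputable def Rot (τ : ℝ) : Matrix (Fin 2) (Fin 2) ℝ :=
  !![Real.cos τ, -Real.sin τ; Real.sin τ, Real.cos τ]

/-- Transformation matrix `T_τ = diag(cos τ, 1)`. -/
noncomputable def Tm (τ : ℝ) : Matrix (Fin 2) (Fin 2) ℝ :=
  !![Real.cos τ, 0; 0, 1]

private lemma dot_conj (B N : Matrix (Fin 2) (Fin 2) ℝ) (x : Fin 2 → ℝ) :
    dotProduct (B.mulVec x) (N.mulVec (B.mulVec x))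
      = dotProduct x ((Bᵀ * N * B).mulVec x) := by
  simp [dotProduct, Matrix.mulVec, Matrix.mul_apply, Fin.sum_univ_two]
  ring

private lemma rot_transpose (φ : ℝ) : (Rot φ)ᵀ = Rot (-φ) := by
  ext i j
  fin_cases i <;> fin_cases j <;> simp [Rot, Real.cos_neg, Real.sin_neg]

private lemma rot_mul_rot_neg (φ : ℝ) : Rot φ * Rot (-φ) = 1 := by
  ext i j
  fin_cases i <;> fin_cases j <;>
    simp [Rot, Matrix.mul_apply, Fin.sum_univ_two, Real.cos_neg, Real.sin_neg,
      Matrix.one_apply] <;>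
    nlinarith [Real.sin_sq_add_cos_sq φ]

private lemma tm_transpose (θ : ℝ) : (Tm θ)ᵀ = Tm θ := by
  ext i j; fin_cases i <;> fin_cases j <;> simp [Tm]

private lemma tm_det (θ : ℝ) : (Tm θ).det = Real.cos θ := by
  simp [Tm, Matrix.det_fin_two_of]

private lemma rot_det (φ : ℝ) : (Rot φ).det = 1 := by
  simp [Rot, Matrix.det_fin_two_of]
  nlinarith [Real.sin_sq_add_cos_sq φ]

private lemma tm_inv (θ : ℝ) (h : Real.cos θ ≠ 0) :
    (Tm θ)⁻¹ = !![(Real.cos θ)⁻¹, 0; 0, 1] := by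
  apply Matrix.inv_eq_left_inv
  ext i j
  fin_cases i <;> fin_cases j <;>
    simp [Tm, Matrix.mul_apply, Fin.sum_univ_two, Matrix.one_apply, inv_mul_cancel₀ h]

theorem astigmatic_equivalence_3D (θi θh φh w : ℝ)
    (hθi : θi ∈ Set.Ico 0 (π / 2)) (hθh : θh ∈ Set.Ico 0 (π / 2)) (hw : 0 < w) :
    ((Tm θh)⁻¹ * (Rot φh)ᵀ * ((1 / w ^ 2) • (Tm θi ^ 2)) * Rot φh * (Tm θh)⁻¹).IsSymm ∧
    ((Tm θh)⁻¹ * (Rot φh)ᵀ * ((1 / w ^ 2) • (Tm θi ^ 2)) * Rot φh * (Tm θh)⁻¹).PosDef ∧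
    ((Tm θh)⁻¹ * (Rot φh)ᵀ * ((1 / w ^ 2) • (Tm θi ^ 2)) * Rot φh * (Tm θh)⁻¹).det
      = Real.cos θi ^ 2 / (w ^ 4 * Real.cos θh ^ 2) ∧
    ∀ (Q : Matrix (Fin 2) (Fin 2) ℝ), Qᵀ * Q = 1 →
      ∀ lam₁ lam₂ : ℝ, 0 < lam₁ → 0 < lam₂ →
        (Tm θh)⁻¹ * (Rot φh)ᵀ * ((1 / w ^ 2) • (Tm θi ^ 2)) * Rot φh * (Tm θh)⁻¹
          = Qᵀ * Matrix.diagonal ![lam₁, lam₂] * Q →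
        ∀ a : Fin 2 → ℝ,
          Real.cos θh * Real.sqrt (lam₁ * lam₂) *
            Real.exp (-2 * dotProduct ((Tm θh * Rot (-φh)).mulVec a)
              ((Qᵀ * Matrix.diagonal ![lam₁, lam₂] * Q).mulVec
                ((Tm θh * Rot (-φh)).mulVec a)))
          = (Real.cos θi / w ^ 2) *
              Real.exp (-(2 / w ^ 2) * dotProduct a ((Tm θi ^ 2).mulVec a)) := by
  have hci : 0 < Real.cos θi :=
    Real.cos_pos_of_mem_Ioo ⟨by nlinarith [Real.pi_pos, hθi.1], hθi.2⟩
  have hch : 0 < Real.cos θh :=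
    Real.cos_pos_of_mem_Ioo ⟨by nlinarith [Real.pi_pos, hθh.1], hθh.2⟩
  set M : Matrix (Fin 2) (Fin 2) ℝ :=
    (Tm θh)⁻¹ * (Rot φh)ᵀ * ((1 / w ^ 2) • (Tm θi ^ 2)) * Rot φh * (Tm θh)⁻¹ with hMdef
  set D : Matrix (Fin 2) (Fin 2) ℝ := (1 / w ^ 2) • (Tm θi ^ 2) with hDdef
  set S : Matrix (Fin 2) (Fin 2) ℝ := Rot φh * (Tm θh)⁻¹ with hSdef
  set B : Matrix (Fin 2) (Fin 2) ℝ := Tm θh * Rot (-φh) with hBdef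
  have hTinv : (Tm θh)⁻¹ = !![(Real.cos θh)⁻¹, 0; 0, 1] := tm_inv θh hch.ne'
  have hTsym : ((Tm θh)⁻¹)ᵀ = (Tm θh)⁻¹ := by
    rw [hTinv]; ext i j; fin_cases i <;> fin_cases j <;> simp
  have hDsym : Dᵀ = D := by
    rw [hDdef]
    ext i j
    fin_cases i <;> fin_cases j <;>
      simp [Tm, pow_two, Matrix.mul_apply, Fin.sum_univ_two]
  have hTT : Tm θh * (Tm θh)⁻¹ = 1 := by
    rw [hTinv]
    ext i j
    fin_cases i <;> fin_cases j <;>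
      simp [Tm, Matrix.mul_apply, Fin.sum_univ_two, Matrix.one_apply,
        mul_inv_cancel₀ hch.ne']
  have hTT' : (Tm θh)⁻¹ * Tm θh = 1 := by
    rw [hTinv]
    ext i j
    fin_cases i <;> fin_cases j <;>
      simp [Tm, Matrix.mul_apply, Fin.sum_univ_two, Matrix.one_apply,
        inv_mul_cancel₀ hch.ne']
  have hSB : S * B = 1 := by
    rw [hSdef, hBdef, Matrix.mul_assoc, ← Matrix.mul_assoc (Tm θh)⁻¹, hTT',
      Matrix.one_mul, rot_mul_rot_neg]
  have hBS : B * S = 1 := by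
    rw [hBdef, hSdef, Matrix.mul_assoc, ← Matrix.mul_assoc (Rot (-φh)),
      show Rot (-φh) * Rot φh = 1 by simpa using rot_mul_rot_neg (-φh),
      Matrix.one_mul, hTT]
  have hM : M = Sᵀ * D * S := by
    rw [hMdef, hSdef, Matrix.transpose_mul, hTsym]
    simp only [Matrix.mul_assoc]
  have key : Bᵀ * M * B = D := by
    have h1 : (S * B)ᵀ * D * (S * B) = Bᵀ * M * B := by
      rw [hM, Matrix.transpose_mul]
      simp only [Matrix.mul_assoc]
    rw [← h1, hSB, Matrix.transpose_one, Matrix.one_mul, Matrix.mul_one]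
  have hsymm : M.IsSymm := by
    rw [Matrix.IsSymm, hM]
    simp only [Matrix.transpose_mul, Matrix.transpose_transpose, hDsym, Matrix.mul_assoc]
  -- determinant
  have hdet : M.det = Real.cos θi ^ 2 / (w ^ 4 * Real.cos θh ^ 2) := by
    have hDdet : D.det = (1 / w ^ 2) ^ 2 * Real.cos θi ^ 2 := by
      rw [hDdef, Matrix.det_smul, Matrix.det_pow, tm_det]
      simp
    have hTid : ((Tm θh)⁻¹).det = (Real.cos θh)⁻¹ := by
      rw [Matrix.det_nonsing_inv, tm_det, Ring.inverse_eq_inv']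
    rw [hM, Matrix.det_mul, Matrix.det_mul, Matrix.det_transpose, hSdef,
      Matrix.det_mul, rot_det, hTid, hDdet]
    field_simp
  -- positive definiteness
  have hpos : M.PosDef := by
    rw [Matrix.posDef_iff_dotProduct_mulVec]
    constructor
    · rw [Matrix.IsHermitian, Matrix.conjTranspose]
      ext i j; simp [hsymm.apply i j]
    · intro x hx
      have hy : (S.mulVec x) ≠ 0 := by
        intro h0
        apply hx
        have hx0 : x = B.mulVec (S.mulVec x) := by
          rw [Matrix.mulVec_mulVec, hBS, Matrix.one_mulVec]
        rw [hx0, h0, Matrix.mulVec_zero]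
      have hq : dotProduct (star x) (M.mulVec x)
          = dotProduct (S.mulVec x) (D.mulVec (S.mulVec x)) := by
        rw [dot_conj S D x, ← hM]
        simp
      rw [hq]
      set y := S.mulVec x with hy'
      have hval : dotProduct y (D.mulVec y)
          = (1 / w ^ 2) * (Real.cos θi ^ 2 * y 0 ^ 2 + y 1 ^ 2) := by
        simp [hDdef, dotProduct, Matrix.mulVec, Tm, pow_two, Matrix.mul_apply,
          Fin.sum_univ_two]
        ring
      rw [hval]
      have hyne : y 0 ≠ 0 ∨ y 1 ≠ 0 := by
        by_contra hcon
        push_neg at hcon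
        apply hy
        funext i
        fin_cases i
        · exact hcon.1
        · exact hcon.2
      have hw2 : (0:ℝ) < 1 / w ^ 2 := by positivity
      apply mul_pos hw2
      rcases hyne with h | h
      · have h0 : 0 < y 0 ^ 2 := by positivity
        nlinarith [sq_nonneg (y 1), mul_pos (pow_pos hci 2) h0]
      · have h1 : 0 < y 1 ^ 2 := by positivity
        nlinarith [mul_nonneg (sq_nonneg (Real.cos θi)) (sq_nonneg (y 0))]
  refine ⟨hsymm, hpos, hdet, ?_⟩
  intro Q hQ lam₁ lam₂ hl1 hl2 hdec a
  have hq2 : Q.det * Q.det = 1 := by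
    have := congrArg Matrix.det hQ
    simpa [Matrix.det_mul, Matrix.det_transpose, mul_comm] using this
  have hlam : lam₁ * lam₂ = Real.cos θi ^ 2 / (w ^ 4 * Real.cos θh ^ 2) := by
    have h1 := congrArg Matrix.det hdec
    rw [hdet] at h1
    rw [Matrix.det_mul, Matrix.det_mul, Matrix.det_transpose,
      Matrix.det_diagonal, Fin.prod_univ_two] at h1
    simp only [Matrix.cons_val_zero, Matrix.cons_val_one, Matrix.head_cons] at h1
    linear_combination -h1 - (lam₁ * lam₂) * hq2
  have hsq : lam₁ * lam₂ = (Real.cos θi / (w ^ 2 * Real.cos θh)) ^ 2 := by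
    rw [hlam]; field_simp
  have hsqrt : Real.sqrt (lam₁ * lam₂) = Real.cos θi / (w ^ 2 * Real.cos θh) := by
    rw [hsq, Real.sqrt_sq (by positivity)]
  have hexp : (-2 : ℝ) * dotProduct (B.mulVec a)
        ((Qᵀ * Matrix.diagonal ![lam₁, lam₂] * Q).mulVec (B.mulVec a))
      = -(2 / w ^ 2) * dotProduct a ((Tm θi ^ 2).mulVec a) := by
    rw [← hdec, dot_conj B M a, key, hDdef]
    rw [Matrix.smul_mulVec, dotProduct_smul]
    simp only [smul_eq_mul]
    ring
  have hco : Real.cos θh * (Real.cos θi / (w ^ 2 * Real.cos θh)) = Real.cos θi / w ^ 2 := by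
    rw [mul_comm (w ^ 2) (Real.cos θh), ← mul_div_assoc,
      mul_div_mul_left _ _ hch.ne']
  rw [hsqrt, hexp, hco]
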